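/- Let d ≥ 2, let L > 0, and let A ⊆ ℝ^{d-1} be a finite set contained in the closed ℓ∞-ball of radius L/2 centered at the origin and shattered by the family 𝓓_{d-1}^0 of closed degenerate balls in ℓ∞^{d-1} containing the origin. Then the set A' = {(a, 0) : a ∈ A} ∪ {(0, …, 0, L), (0, …, 0, -L)} ⊆ ℝ^d is shattered by the family 𝓒_d of closed balls in ℓ∞^d. Consequently VC-dim(𝓒_d) ≥ VC-dim(𝓓_{d-1}^0) + 2. -/

import Mathlib

open Set Metric

/-- A family `E` of subsets of `X` shatters a set `σ` if every subset of `σ`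
is carved out by some member of `E`. -/
def Shatters {X : Type*} (E : Set (Set X)) (σ : Set X) : Prop :=
  ∀ T ⊆ σ, ∃ C ∈ E, C ∩ σ = T

/-- Vapnik–Chervonenkis dimension: supremum of cardinalities of finite shattered sets. -/
noncomputable def vcDim {X : Type*} (E : Set (Set X)) : ℕ∞ :=
  ⨆ (σ : Finset X) (_ : Shatters E ↑σ), (σ.card : ℕ∞)

/-- The family of all closed balls in `ℓ∞^d` (sup-norm balls = axis-parallel cubes,
including singletons as balls of radius 0). -/
def Cd (d : ℕ) : Set (Set (Fin d → ℝ)) :=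
  {C | ∃ x : Fin d → ℝ, ∃ r : ℝ, 0 ≤ r ∧ C = Metric.closedBall x r}

/-- A closed degenerate ball in `ℓ∞^d`: a product of closed intervals, each of which is
unbounded on at least one side, i.e. of the form `(-∞, b]`, `[a, ∞)` or all of `ℝ`. -/
def IsDegBall {d : ℕ} (C : Set (Fin d → ℝ)) : Prop :=
  ∃ I : Fin d → Set ℝ,
    (∀ i, (∃ b, I i = Set.Iic b) ∨ (∃ a, I i = Set.Ici a) ∨ I i = Set.univ) ∧
    C = {x | ∀ i, x i ∈ I i}

/-- The family of all closed degenerate balls in `ℓ∞^d`. -/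
def Dd (d : ℕ) : Set (Set (Fin d → ℝ)) := {C | IsDegBall C}

/-- The family of closed degenerate balls in `ℓ∞^d` containing the set `F`. -/
def DdF (d : ℕ) (F : Set (Fin d → ℝ)) : Set (Set (Fin d → ℝ)) :=
  {C | IsDegBall C ∧ F ⊆ C}

/-- The family of closed degenerate balls in `ℓ∞^d` containing the origin. -/
def Dd0 (d : ℕ) : Set (Set (Fin d → ℝ)) := DdF d {0}

/-- `padLast x r : ℝ^d` is the point whose first `d-1` coordinates are those of `x`
and whose last coordinate is `r`. -/
def padLast {d : ℕ} (x : Fin (d - 1) → ℝ) (r : ℝ) : Fin d → ℝ :=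
  fun i => if h : (i : ℕ) < d - 1 then x ⟨i, h⟩ else r

/-- If `A ⊆ ℝ^{d-1}` lies in the closed `ℓ∞`-ball of radius `L/2` about the origin and is
shattered by `Dd0 (d-1)`, then `{(a,0) : a ∈ A} ∪ {(0,…,0,L), (0,…,0,-L)} ⊆ ℝ^d` is
shattered by `Cd d`; consequently `vcDim (Cd d) ≥ vcDim (Dd0 (d-1)) + 2`. -/
lemma padLast_pos {d : ℕ} (x : Fin (d - 1) → ℝ) (r : ℝ) (j : Fin d)
    (h : (j : ℕ) < d - 1) : padLast x r j = x ⟨j, h⟩ := dif_pos h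

lemma padLast_neg {d : ℕ} (x : Fin (d - 1) → ℝ) (r : ℝ) (j : Fin d)
    (h : ¬ (j : ℕ) < d - 1) : padLast x r j = r := dif_neg h

lemma padLast_injective {d : ℕ} (r : ℝ) :
    Function.Injective (fun x : Fin (d - 1) → ℝ => padLast x r) := by
  intro a b hab
  funext i
  have hi' : (i : ℕ) < d := lt_of_lt_of_le i.isLt (Nat.sub_le d 1)
  have h2 : padLast a r ⟨i, hi'⟩ = padLast b r ⟨i, hi'⟩ := congrFun hab ⟨i, hi'⟩
  rw [padLast_pos a r _ i.isLt, padLast_pos b r _ i.isLt] at h2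
  simpa using h2

lemma padLast_last {d : ℕ} (hd : 1 ≤ d) (x : Fin (d - 1) → ℝ) (r : ℝ) :
    padLast x r ⟨d - 1, by omega⟩ = r :=
  padLast_neg x r _ (by simp)

lemma main_shatter (d : ℕ) (hd : 2 ≤ d) (L : ℝ) (hL : 0 < L)
    (A : Finset (Fin (d - 1) → ℝ))
    (hA : (↑A : Set (Fin (d - 1) → ℝ)) ⊆ Metric.closedBall 0 (L / 2))
    (hshat : Shatters (Dd0 (d - 1)) ↑A) :
    Shatters (Cd d)
      ((fun a : Fin (d - 1) → ℝ => padLast a 0) '' ↑A ∪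
        {padLast (0 : Fin (d - 1) → ℝ) L, padLast (0 : Fin (d - 1) → ℝ) (-L)}) := by
  classical
  intro T hT
  set pL := padLast (0 : Fin (d - 1) → ℝ) L with hpLdef
  set mL := padLast (0 : Fin (d - 1) → ℝ) (-L) with hmLdef
  obtain ⟨C, ⟨⟨I, hI, hCeq⟩, h0C⟩, hCS⟩ :=
    hshat {x | x ∈ (A : Set _) ∧ padLast x 0 ∈ T} (fun x hx => hx.1)
  have h0 : ∀ i, (0 : ℝ) ∈ I i := by
    intro i
    have h := h0C (mem_singleton (0 : Fin (d - 1) → ℝ))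
    rw [hCeq] at h
    simpa using h i
  set u : ℝ := if pL ∈ T then L else L / 2 with hu
  set l : ℝ := if mL ∈ T then -L else -L / 2 with hl
  have huL : L / 2 ≤ u ∧ u ≤ L := by rw [hu]; split_ifs <;> constructor <;> linarith
  have hlL : -L ≤ l ∧ l ≤ -L / 2 := by rw [hl]; split_ifs <;> constructor <;> linarith
  set R : ℝ := (u - l) / 2 with hR
  set m : ℝ := (u + l) / 2 with hm
  have hRL : L / 2 ≤ R := by rw [hR]; linarith [huL.1, hlL.2]
  have hR0 : (0 : ℝ) ≤ R := by linarith
  set c : Fin d → ℝ := fun j =>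
    if h : (j : ℕ) < d - 1 then
      if hb : ∃ b, I ⟨j, h⟩ = Iic b then min hb.choose (L / 2) - R
      else if ha : ∃ a, I ⟨j, h⟩ = Ici a then max ha.choose (-(L / 2)) + R
      else 0
    else m with hc
  -- the key coordinate lemma
  have key : ∀ (j : Fin d) (h : (j : ℕ) < d - 1) (t : ℝ), |t| ≤ L / 2 →
      (|t - c j| ≤ R ↔ t ∈ I ⟨j, h⟩) := by
    intro j h t ht
    have habs := abs_le.1 ht
    rw [hc]
    simp only [dif_pos h]
    rcases hI ⟨j, h⟩ with ⟨b, hb⟩ | ⟨a, ha⟩ | huniv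
    · have hexb : ∃ b, I ⟨j, h⟩ = Iic b := ⟨b, hb⟩
      rw [dif_pos hexb]
      have hbe : I ⟨j, h⟩ = Iic hexb.choose := hexb.choose_spec
      set b' := hexb.choose with hb'
      have hb0 : (0 : ℝ) ≤ b' := by have h0' := h0 ⟨j, h⟩; rw [hbe] at h0'; exact h0'
      rw [hbe, mem_Iic, abs_le]
      constructor
      · rintro ⟨h1, h2⟩
        have hmin := min_le_left b' (L / 2)
        linarith
      · intro hle
        have hmin : t ≤ min b' (L / 2) := le_min hle habs.2
        have hmin2 := min_le_right b' (L / 2)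
        constructor <;> linarith [habs.1, habs.2]
    · have hnb : ¬ ∃ b, I ⟨j, h⟩ = Iic b := by
        rintro ⟨b, hb⟩
        rw [ha] at hb
        have h1 : max a (b + 1) ∈ Ici a := mem_Ici.mpr (le_max_left _ _)
        rw [hb, mem_Iic] at h1
        have h2 := le_max_right a (b + 1)
        linarith
      rw [dif_neg hnb]
      have hexa : ∃ a, I ⟨j, h⟩ = Ici a := ⟨a, ha⟩
      rw [dif_pos hexa]
      have hae : I ⟨j, h⟩ = Ici hexa.choose := hexa.choose_spec
      set a' := hexa.choose with ha'
      have ha0 : a' ≤ (0 : ℝ) := by have h0' := h0 ⟨j, h⟩; rw [hae] at h0'; exact h0'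
      rw [hae, mem_Ici, abs_le]
      constructor
      · rintro ⟨h1, h2⟩
        have hmax := le_max_left a' (-(L / 2))
        linarith
      · intro hle
        have hmax : max a' (-(L / 2)) ≤ t := max_le hle (by linarith [habs.1])
        have hmax2 := le_max_right a' (-(L / 2))
        constructor <;> linarith [habs.1, habs.2]
    · have hnb : ¬ ∃ b, I ⟨j, h⟩ = Iic b := by
        rintro ⟨b, hb⟩
        rw [huniv] at hb
        have h1 : (b + 1 : ℝ) ∈ (univ : Set ℝ) := mem_univ _
        rw [hb, mem_Iic] at h1
        linarith
      have hna : ¬ ∃ a, I ⟨j, h⟩ = Ici a := by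
        rintro ⟨a, ha⟩
        rw [huniv] at ha
        have h1 : (a - 1 : ℝ) ∈ (univ : Set ℝ) := mem_univ _
        rw [ha, mem_Ici] at h1
        linarith
      rw [dif_neg hnb, dif_neg hna, huniv]
      simp only [mem_univ, iff_true, sub_zero]
      rw [abs_le]
      constructor <;> linarith [habs.1, habs.2]
  have hclast : ∀ j : Fin d, ¬ (j : ℕ) < d - 1 → c j = m := by
    intro j hj; rw [hc]; simp only [dif_neg hj]
  have hmemcube : ∀ p : Fin d → ℝ, p ∈ closedBall c R ↔ ∀ j, |p j - c j| ≤ R := by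
    intro p
    rw [mem_closedBall, dist_pi_le_iff hR0]
    simp [Real.dist_eq]
  have habsA : ∀ a ∈ (A : Set (Fin (d - 1) → ℝ)), ∀ i, |a i| ≤ L / 2 := by
    intro a ha i
    have h := hA ha
    rw [mem_closedBall, dist_pi_le_iff (by linarith)] at h
    simpa [Real.dist_eq] using h i
  have hlastm : ∀ t : ℝ, (|t - m| ≤ R ↔ l ≤ t ∧ t ≤ u) := by
    intro t
    rw [abs_le, hm, hR]
    constructor <;> rintro ⟨h1, h2⟩ <;> constructor <;> linarith
  -- membership of padded points
  have hmemA : ∀ a ∈ (A : Set (Fin (d - 1) → ℝ)),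
      (padLast a 0 ∈ closedBall c R ↔ a ∈ C) := by
    intro a ha
    rw [hmemcube, hCeq]
    constructor
    · intro hp i
      have hi' : (i : ℕ) < d := lt_of_lt_of_le i.isLt (Nat.sub_le d 1)
      have hk := (key ⟨i, hi'⟩ i.isLt (a i) (habsA a ha i)).mp
      have hpi := hp ⟨i, hi'⟩
      rw [padLast_pos a 0 _ i.isLt] at hpi
      simpa using hk (by simpa using hpi)
    · intro hCmem j
      by_cases hj : (j : ℕ) < d - 1
      · rw [padLast_pos a 0 j hj]
        exact (key j hj (a ⟨j, hj⟩) (habsA a ha _)).mpr (hCmem ⟨j, hj⟩)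
      · rw [padLast_neg a 0 j hj, hclast j hj]
        rw [hlastm]
        constructor <;> linarith [huL.1, hlL.2]
  have hmem0 : ∀ j : Fin d, (hj : (j : ℕ) < d - 1) → |0 - c j| ≤ R := by
    intro j hj
    exact (key j hj 0 (by simp; linarith)).mpr (h0 ⟨j, hj⟩)
  have hmempL : pL ∈ closedBall c R ↔ pL ∈ T := by
    rw [hmemcube]
    constructor
    · intro hp
      by_contra hpT
      have hj : ¬ ((⟨d - 1, by omega⟩ : Fin d) : ℕ) < d - 1 := by simp
      have := hp ⟨d - 1, by omega⟩
      rw [hpLdef, padLast_neg _ _ _ hj, hclast _ hj, hlastm] at this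
      have huval : u = L / 2 := by rw [hu, if_neg hpT]
      linarith [this.2]
    · intro hpT j
      by_cases hj : (j : ℕ) < d - 1
      · rw [hpLdef, padLast_pos _ _ j hj]
        simpa using hmem0 j hj
      · rw [hpLdef, padLast_neg _ _ j hj, hclast j hj, hlastm]
        have huval : u = L := by rw [hu, if_pos hpT]
        constructor <;> linarith [hlL.1]
  have hmemmL : mL ∈ closedBall c R ↔ mL ∈ T := by
    rw [hmemcube]
    constructor
    · intro hp
      by_contra hpT
      have hj : ¬ ((⟨d - 1, by omega⟩ : Fin d) : ℕ) < d - 1 := by simp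
      have := hp ⟨d - 1, by omega⟩
      rw [hmLdef, padLast_neg _ _ _ hj, hclast _ hj, hlastm] at this
      have hlval : l = -L / 2 := by rw [hl, if_neg hpT]
      linarith [this.1]
    · intro hpT j
      by_cases hj : (j : ℕ) < d - 1
      · rw [hmLdef, padLast_pos _ _ j hj]
        simpa using hmem0 j hj
      · rw [hmLdef, padLast_neg _ _ j hj, hclast j hj, hlastm]
        have hlval : l = -L := by rw [hl, if_pos hpT]
        constructor <;> linarith [huL.2]
  refine ⟨closedBall c R, ⟨c, R, hR0, rfl⟩, ?_⟩
  ext p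
  simp only [mem_inter_iff, mem_union, mem_image, Finset.mem_coe,
    mem_insert_iff, mem_singleton_iff]
  constructor
  · rintro ⟨hcube, (⟨a, haA, rfl⟩ | rfl | rfl)⟩
    · have haC : a ∈ C := (hmemA a haA).mp hcube
      have : a ∈ C ∩ (A : Set _) := ⟨haC, haA⟩
      rw [hCS] at this
      exact this.2
    · exact hmempL.mp hcube
    · exact hmemmL.mp hcube
  · intro hpT
    refine ⟨?_, ?_⟩
    · rcases hT hpT with ⟨a, haA, rfl⟩ | rfl | rfl
      · have haS : a ∈ C ∩ (A : Set _) := by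
          rw [hCS]; exact ⟨haA, hpT⟩
        exact (hmemA a haA).mpr haS.1
      · exact hmempL.mpr hpT
      · exact hmemmL.mpr hpT
    · exact hT hpT

lemma shatters_empty_Dd0 (n : ℕ) :
    Shatters (Dd0 n) (↑(∅ : Finset (Fin n → ℝ))) := by
  intro T hT
  have hTe : T = ∅ := by simpa [Set.subset_empty_iff] using hT
  refine ⟨univ, ⟨⟨fun _ => univ, fun i => Or.inr (Or.inr rfl), by ext x; simp⟩,
    subset_univ _⟩, ?_⟩
  simp [hTe]

lemma card_le_vcDim {X : Type*} (E : Set (Set X)) (σ : Finset X)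
    (h : Shatters E ↑σ) : (σ.card : ℕ∞) ≤ vcDim E :=
  le_iSup₂_of_le σ h le_rfl

theorem vcDim_Cd_ge_vcDim_Dd0_add_two (d : ℕ) (hd : 2 ≤ d) :
    (∀ L : ℝ, 0 < L → ∀ A : Finset (Fin (d - 1) → ℝ),
      (↑A : Set (Fin (d - 1) → ℝ)) ⊆ Metric.closedBall 0 (L / 2) →
      Shatters (Dd0 (d - 1)) ↑A →
      Shatters (Cd d)
        ((fun a : Fin (d - 1) → ℝ => padLast a 0) '' ↑A ∪
          {padLast (0 : Fin (d - 1) → ℝ) L, padLast (0 : Fin (d - 1) → ℝ) (-L)})) ∧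
      vcDim (Dd0 (d - 1)) + 2 ≤ vcDim (Cd d) := by
  classical
  refine ⟨fun L hL A hA hshat => main_shatter d hd L hL A hA hshat, ?_⟩
  -- step: every shattered finset gives card + 2 ≤ vcDim (Cd d)
  have h2 : ∀ σ : Finset (Fin (d - 1) → ℝ), Shatters (Dd0 (d - 1)) ↑σ →
      (σ.card : ℕ∞) + 2 ≤ vcDim (Cd d) := by
    intro σ hσ
    obtain ⟨r, hr⟩ := ((σ : Set (Fin (d - 1) → ℝ)).toFinite.isBounded).subset_closedBall 0
    set L : ℝ := 2 * max r 1 with hLdef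
    have hL : 0 < L := by
      have := le_max_right r 1
      rw [hLdef]; linarith
    have hsub : (↑σ : Set (Fin (d - 1) → ℝ)) ⊆ Metric.closedBall 0 (L / 2) := by
      refine hr.trans (closedBall_subset_closedBall ?_)
      rw [hLdef]; rw [show (2 : ℝ) * max r 1 / 2 = max r 1 by ring]
      exact le_max_left r 1
    have hsh' := main_shatter d hd L hL σ hsub hσ
    set pL := padLast (0 : Fin (d - 1) → ℝ) L with hpLdef
    set mL := padLast (0 : Fin (d - 1) → ℝ) (-L) with hmLdef
    have hd1 : 1 ≤ d := by omega
    have hlastpL : pL ⟨d - 1, by omega⟩ = L := padLast_last hd1 _ _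
    have hlastmL : mL ⟨d - 1, by omega⟩ = -L := padLast_last hd1 _ _
    have hpLne : pL ≠ mL := by
      intro h
      have := congrFun h ⟨d - 1, by omega⟩
      rw [hlastpL, hlastmL] at this
      linarith
    set σ' : Finset (Fin d → ℝ) :=
      σ.image (fun a => padLast a 0) ∪ {pL, mL} with hσ'def
    have hcoe : (↑σ' : Set (Fin d → ℝ)) =
        (fun a : Fin (d - 1) → ℝ => padLast a 0) '' ↑σ ∪ {pL, mL} := by
      rw [hσ'def]
      simp [Finset.coe_union, Finset.coe_image, Set.insert_union]
    have hsh'' : Shatters (Cd d) ↑σ' := by rw [hcoe]; exact hsh'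
    have hdisj : Disjoint (σ.image (fun a => padLast a 0)) ({pL, mL} : Finset _) := by
      rw [Finset.disjoint_left]
      intro p hp hpair
      obtain ⟨a, _, rfl⟩ := Finset.mem_image.mp hp
      have hlast : padLast a 0 ⟨d - 1, by omega⟩ = 0 := padLast_last hd1 _ _
      rcases Finset.mem_insert.mp hpair with h | h
      · rw [h] at hlast; rw [hlastpL] at hlast; linarith
      · rw [Finset.mem_singleton.mp h] at hlast; rw [hlastmL] at hlast; linarith
    have hcard : σ'.card = σ.card + 2 := by
      rw [hσ'def, Finset.card_union_of_disjoint hdisj,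
        Finset.card_image_of_injective _ (padLast_injective 0),
        Finset.card_pair hpLne]
    calc (σ.card : ℕ∞) + 2 = (σ'.card : ℕ∞) := by rw [hcard]; push_cast; ring
      _ ≤ vcDim (Cd d) := card_le_vcDim _ _ hsh''
  have hmono : vcDim (Dd0 (d - 1)) ≤ vcDim (Cd d) := by
    rw [vcDim]
    refine iSup₂_le fun σ hσ => ?_
    exact le_trans le_self_add (h2 σ hσ)
  by_cases htop : vcDim (Dd0 (d - 1)) = ⊤
  · rw [htop, top_add]
    rw [htop] at hmono
    exact hmono
  · obtain ⟨n, hn⟩ := WithTop.ne_top_iff_exists.mp htop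
    cases n with
    | zero =>
      rw [← hn]
      have h := h2 ∅ (shatters_empty_Dd0 (d - 1))
      simp only [Finset.card_empty, Nat.cast_zero] at h
      exact h
    | succ k =>
      have hlt : (k : ℕ∞) < vcDim (Dd0 (d - 1)) := by
        rw [← hn]
        exact WithTop.coe_lt_coe.mpr (lt_add_one k)
      rw [vcDim] at hlt
      obtain ⟨σ, hσ⟩ := lt_iSup_iff.mp hlt
      have hs : Shatters (Dd0 (d - 1)) ↑σ := by
        by_contra hns
        rw [iSup_neg hns] at hσ
        exact absurd hσ (by simp)
      rw [iSup_pos hs] at hσ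
      have hcard : (k + 1 : ℕ) ≤ σ.card := by exact_mod_cast hσ
      calc vcDim (Dd0 (d - 1)) + 2 = ((k + 1 : ℕ) : ℕ∞) + 2 := by rw [← hn]; rfl
        _ ≤ (σ.card : ℕ∞) + 2 := by
            exact add_le_add_left (by exact_mod_cast hcard) 2
        _ ≤ vcDim (Cd d) := h2 σ hs
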